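/- arXiv:1309.0019 — 2 statements merged into one kernel-verified Lean document; each statement's English description precedes it below -/
import Mathlib

section
/- Let R be a complete Noetherian local O-algebra with residue field F which is ϖ-torsion free, and let I be the kernel of the surjection R → R^red onto its maximal reduced quotient. Then R^red is ϖ-torsion free and the sequence 0 → I/ϖI → R/ϖ → R^red/ϖ → 0 is exact. -/
open IsLocalRing

/-- Let `O` be a complete discrete valuation ring with uniformiser `ϖ` and
residue field `F`, and let `R` be a complete Noetherian local `O`-algebra with residue field
`F` which is `ϖ`-torsion free.  Let `I` be the kernel of the surjection `R → R^red` onto the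
maximal reduced quotient (i.e. `I = nilradical R`).  Then `R^red` is `ϖ`-torsion free and the
sequence `0 → I/ϖI → R/ϖ → R^red/ϖ → 0` is exact. -/
theorem nilradical_sequence_exact
    (O : Type*) [CommRing O] [IsDomain O] [IsDiscreteValuationRing O]
    [IsAdicComplete (maximalIdeal O) O] (ϖ : O) (hϖ : Irreducible ϖ)
    (F : Type*) [Field F]
    (R : Type*) [CommRing R] [IsLocalRing R] [IsNoetherianRing R] [Algebra O R]
    [IsAdicComplete (maximalIdeal R) R]
    (hres : Nonempty (ResidueField R ≃+* F))
    (htf : ∀ r : R, algebraMap O R ϖ * r = 0 → r = 0) :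
    -- `R^red` is `ϖ`-torsion free:
    (∀ y : R ⧸ nilradical R, algebraMap O (R ⧸ nilradical R) ϖ * y = 0 → y = 0) ∧
    -- the sequence `0 → I/ϖI → R/ϖ → R^red/ϖ → 0` is exact, where the two maps are the
    -- natural ones:
    (∀ (f : (↥(nilradical R) ⧸
            (Ideal.span {algebraMap O R ϖ} • (⊤ : Submodule R ↥(nilradical R)))) →ₗ[R]
          R ⧸ (Ideal.span {algebraMap O R ϖ})),
      f = Submodule.mapQ _ _ ((nilradical R).subtype)
        (by
          refine Submodule.smul_le.mpr ?_
          intro r hr n _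
          simpa [smul_eq_mul] using Ideal.mul_mem_right (n : R) _ hr) →
      ∀ (g : (R ⧸ (Ideal.span {algebraMap O R ϖ})) →+*
          ((R ⧸ nilradical R) ⧸
            (Ideal.span {algebraMap O (R ⧸ nilradical R) ϖ}))),
        g = Ideal.Quotient.lift (Ideal.span {algebraMap O R ϖ})
          ((Ideal.Quotient.mk
              (Ideal.span {algebraMap O (R ⧸ nilradical R) ϖ})).comp
            (Ideal.Quotient.mk (nilradical R)))
          (by
            intro a ha
            rw [Ideal.mem_span_singleton] at ha
            obtain ⟨b, rfl⟩ := ha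
            rw [RingHom.comp_apply, map_mul, Ideal.Quotient.eq_zero_iff_mem]
            refine Ideal.mul_mem_right _ _ (Ideal.subset_span ?_)
            have h : algebraMap O (R ⧸ nilradical R) ϖ =
                Ideal.Quotient.mk (nilradical R) (algebraMap O R ϖ) := by
              rw [IsScalarTower.algebraMap_apply O R (R ⧸ nilradical R),
                Ideal.Quotient.algebraMap_eq]
            exact Set.mem_singleton_iff.mpr h.symm) →
        Function.Injective f ∧ Function.Exact f g ∧ Function.Surjective g) := by
    classical
  set π : R := algebraMap O R ϖ with hπ
  -- torsion-freeness for powers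
  have htfk : ∀ (k : ℕ) (r : R), π ^ k * r = 0 → r = 0 := by
    intro k
    induction k with
    | zero => intro r h; simpa using h
    | succ n ih =>
      intro r h
      have : π ^ n * (π * r) = 0 := by ring_nf; ring_nf at h; exact h
      exact htf r (ih _ this)
  have key : ∀ r : R, π * r ∈ nilradical R → r ∈ nilradical R := by
    intro r hr
    rw [mem_nilradical] at hr ⊢
    obtain ⟨k, hk⟩ := hr
    rw [mul_pow] at hk
    exact ⟨k, htfk k _ hk⟩
  have halg : algebraMap O (R ⧸ nilradical R) ϖ = Ideal.Quotient.mk (nilradical R) π := by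
    rw [IsScalarTower.algebraMap_apply O R (R ⧸ nilradical R), Ideal.Quotient.algebraMap_eq, hπ]
  constructor
  · intro y hy
    obtain ⟨x, rfl⟩ := Ideal.Quotient.mk_surjective y
    rw [halg, ← map_mul, Ideal.Quotient.eq_zero_iff_mem] at hy
    rw [Ideal.Quotient.eq_zero_iff_mem]
    exact key x hy
  · rintro f rfl g rfl
    refine ⟨?_, ?_, ?_⟩
    · -- injectivity
      rw [← LinearMap.ker_eq_bot, LinearMap.ker_eq_bot']
      intro m hm
      obtain ⟨⟨n, hn⟩, rfl⟩ := Submodule.Quotient.mk_surjective _ m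
      rw [Submodule.mapQ_apply] at hm
      have hn' : n ∈ Ideal.span {π} :=
        Ideal.Quotient.eq_zero_iff_mem.mp (by simpa using hm)
      rw [Ideal.mem_span_singleton] at hn'
      obtain ⟨b, hb⟩ := hn'
      have hbnil : b ∈ nilradical R := key b (hb ▸ hn)
      rw [Submodule.Quotient.mk_eq_zero]
      have : (⟨n, hn⟩ : ↥(nilradical R)) = π • (⟨b, hbnil⟩ : ↥(nilradical R)) := by
        ext; simpa [smul_eq_mul] using hb
      rw [this]
      exact Submodule.smul_mem_smul (Ideal.subset_span rfl) Submodule.mem_top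
    · -- exactness
      intro y
      obtain ⟨r, rfl⟩ := Ideal.Quotient.mk_surjective y
      rw [Ideal.Quotient.lift_mk]
      constructor
      · intro h
        rw [RingHom.comp_apply, Ideal.Quotient.eq_zero_iff_mem, halg,
          Ideal.mem_span_singleton] at h
        obtain ⟨c, hc⟩ := h
        obtain ⟨b, rfl⟩ := Ideal.Quotient.mk_surjective c
        rw [← map_mul, Ideal.Quotient.mk_eq_mk_iff_sub_mem] at hc
        refine ⟨Submodule.Quotient.mk ⟨r - π * b, hc⟩, ?_⟩
        rw [Submodule.mapQ_apply]
        have : (Submodule.Quotient.mk (r - π * b) : R ⧸ Ideal.span {π}) =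
            Ideal.Quotient.mk (Ideal.span {π}) (r - π * b) := rfl
        show (Submodule.Quotient.mk (r - π * b) : R ⧸ Ideal.span {π}) = _
        rw [this, Ideal.Quotient.mk_eq_mk_iff_sub_mem]
        simpa using Ideal.mul_mem_right b _ (Ideal.mem_span_singleton_self π)
      · rintro ⟨m, hm⟩
        obtain ⟨⟨n, hn⟩, rfl⟩ := Submodule.Quotient.mk_surjective _ m
        rw [Submodule.mapQ_apply] at hm
        have heq : (Ideal.Quotient.mk (Ideal.span {π})) r = Ideal.Quotient.mk _ n := hm.symm
        rw [Ideal.Quotient.mk_eq_mk_iff_sub_mem, Ideal.mem_span_singleton] at heq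
        obtain ⟨b, hb⟩ := heq
        rw [RingHom.comp_apply, Ideal.Quotient.eq_zero_iff_mem]
        have hr : r = n + π * b := by linear_combination hb
        rw [hr, map_add, map_mul]
        have h0 : Ideal.Quotient.mk (nilradical R) n = 0 :=
          Ideal.Quotient.eq_zero_iff_mem.mpr hn
        rw [h0, zero_add, ← halg]
        exact Ideal.mul_mem_right _ _ (Ideal.mem_span_singleton_self _)
    · -- surjectivity
      intro z
      obtain ⟨w, rfl⟩ := Ideal.Quotient.mk_surjective z
      obtain ⟨r, rfl⟩ := Ideal.Quotient.mk_surjective w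
      exact ⟨Ideal.Quotient.mk _ r, Ideal.Quotient.lift_mk _ _ _⟩
end

section
/- Let G be a group, H ≤ G a subgroup, and ψ a character of H (a one-dimensional representation over a field). Suppose Z is a subgroup with H ⊆ Z ⊆ G and Z is the full stabilizer in G of the restriction ψ|_{H'} for some normal subgroup H' ⊆ H of G contained in H (meaning: for t ∈ G, ψ^t = ψ on H' implies t ∈ Z). If Z = H, then for each t ∈ G \ H, the characters ψ and ψ^t disagree on tHt^{-1} ∩ H, and consequently the induced representation Ind_H^G ψ is irreducible (when G is finite, by Mackey's criterion). -/
set_option maxHeartbeats 1000000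
set_option synthInstance.maxHeartbeats 400000


/-- The space of the representation of `G` induced from a character `ψ` of a subgroup `H`:
functions `f : G → F` with `f(hg) = ψ(h)f(g)` for `h ∈ H`. -/
def IndSubmodule (F : Type*) [Field F] {G : Type*} [Group G] (H : Subgroup G)
    (ψ : ↥H →* Fˣ) : Submodule F (G → F) where
  carrier := {f | ∀ (h : ↥H) (g : G), f (↑h * g) = (ψ h : F) * f g}
  add_mem' := by
    intro a b ha hb h g
    simp only [Pi.add_apply, ha h g, hb h g]
    ring
  zero_mem' := by intro h g; simp
  smul_mem' := by
    intro c a ha h g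
    simp only [Pi.smul_apply, ha h g, smul_eq_mul]
    ring

/-- The induced representation `Ind_H^G ψ` of `G`, acting by right translation on
`IndSubmodule F H ψ`. -/
noncomputable def indRep (F : Type*) [Field F] {G : Type*} [Group G] (H : Subgroup G)
    (ψ : ↥H →* Fˣ) : Representation F G ↥(IndSubmodule F H ψ) where
  toFun x :=
    { toFun := fun f => ⟨fun g => f.1 (g * x), fun h g => by
        simpa [mul_assoc] using f.2 h (g * x)⟩
      map_add' := by intro a b; rfl
      map_smul' := by intro c a; rfl }
  map_one' := by ext f g; simp
  map_mul' := by intro x y; ext f g; simp [mul_assoc]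

/-- Let `G` be a group, `H ≤ G` and `ψ` a character of `H` over a field
`F`.  Suppose `H' ⊆ H` is a normal subgroup of `G`, and `Z` (with `H ⊆ Z ⊆ G`) is the full
stabilizer of `ψ|_{H'}`, in the sense that any `t` with `ψᵗ = ψ` on `H'` lies in `Z`.  If
`Z = H`, then for each `t ∈ G \ H` the characters `ψ` and `ψᵗ` disagree on `tHt⁻¹ ∩ H`, and
consequently (for `G` finite, by Mackey's criterion) the induced representation `Ind_H^G ψ`
is irreducible. -/
theorem induced_character_irreducible_of_stabilizer_eq
    (F : Type*) [Field F] {G : Type*} [Group G] [Finite G]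
    (H' Z H : Subgroup G) (ψ : ↥H →* Fˣ)
    (hH'H : H' ≤ H) (hHZ : H ≤ Z) (hn : H'.Normal)
    (hstab : ∀ t : G,
      (∀ (x : G) (hx : x ∈ H'), ψ ⟨t * x * t⁻¹, hH'H (hn.conj_mem x hx t)⟩ = ψ ⟨x, hH'H hx⟩) →
      t ∈ Z)
    (hZ : Z = H) :
    (∀ t : G, t ∉ H →
      ∃ (x : G) (hx : x ∈ H) (hx' : t⁻¹ * x * t ∈ H),
        ψ ⟨x, hx⟩ ≠ ψ ⟨t⁻¹ * x * t, hx'⟩) ∧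
    IsSimpleModule (MonoidAlgebra F G) (indRep F H ψ).asModule := by
  classical
  -- the contrapositive of `hstab`
  have hstab' : ∀ t : G, t ∉ H → ∃ (x : G) (hx : x ∈ H'),
      ψ ⟨t * x * t⁻¹, hH'H (hn.conj_mem x hx t)⟩ ≠ ψ ⟨x, hH'H hx⟩ := by
    intro t ht
    by_contra hc
    push_neg at hc
    exact ht (hZ ▸ hstab t hc)
  have part1 : ∀ t : G, t ∉ H →
      ∃ (x : G) (hx : x ∈ H) (hx' : t⁻¹ * x * t ∈ H),
        ψ ⟨x, hx⟩ ≠ ψ ⟨t⁻¹ * x * t, hx'⟩ := by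
    intro t ht
    obtain ⟨x, hx, hne⟩ := hstab' t ht
    have hx1 : t * x * t⁻¹ ∈ H := hH'H (hn.conj_mem x hx t)
    have hx2 : t⁻¹ * (t * x * t⁻¹) * t ∈ H := by
      have e : t⁻¹ * (t * x * t⁻¹) * t = x := by group
      rw [e]; exact hH'H hx
    refine ⟨t * x * t⁻¹, hx1, hx2, ?_⟩
    have e1 : (⟨t⁻¹ * (t * x * t⁻¹) * t, hx2⟩ : ↥H) = ⟨x, hH'H hx⟩ :=
      Subtype.ext (by group)
    rw [e1]; exact hne
  refine ⟨part1, ?_⟩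
  set V := IndSubmodule F H ψ with hV
  set ρ := indRep F H ψ with hρ
  -- evaluation of an element of the module at a group element
  let ev : ρ.asModule → G → F := fun f g => ((ρ.asModuleEquiv f : ↥V) : G → F) g
  have ev_smul : ∀ (n : G) (c : F) (f : ρ.asModule) (g : G),
      ev ((MonoidAlgebra.single n c : MonoidAlgebra F G) • f) g = c * ev f (g * n) := by
    intro n c f g
    show ((ρ.asModuleEquiv ((MonoidAlgebra.single n c : MonoidAlgebra F G) • f) : ↥V) : G → F) g = _
    rw [ρ.asModuleEquiv_map_smul, Representation.asAlgebraHom_single]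
    rfl
  have ev_sub : ∀ (a b : ρ.asModule) (g : G), ev (a - b) g = ev a g - ev b g := by
    intro a b g
    rfl
  have ev_prop : ∀ (f : ρ.asModule) (g : G) (m : G) (hm : m ∈ H),
      ev f (m * g) = (ψ ⟨m, hm⟩ : F) * ev f g := fun f g m hm =>
    (ρ.asModuleEquiv f : ↥V).2 ⟨m, hm⟩ g
  have ev_conj : ∀ (f : ρ.asModule) (g n : G) (hn' : n ∈ H'),
      ev f (g * n) = (ψ ⟨g * n * g⁻¹, hH'H (hn.conj_mem n hn' g)⟩ : F) * ev f g := by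
    intro f g n hn'
    have h1 := ev_prop f g (g * n * g⁻¹) (hH'H (hn.conj_mem n hn' g))
    have e : g * n * g⁻¹ * g = g * n := by group
    rw [e] at h1
    exact h1
  have ev_zero : ∀ (f : ρ.asModule), (∀ g, ev f g = 0) → f = 0 := by
    intro f hf
    exact ρ.asModuleEquiv.injective
      ((Subtype.ext (funext hf)) : ρ.asModuleEquiv f = ρ.asModuleEquiv 0)
  -- separating characters on distinct cosets
  have sep : ∀ g₀ g₁ : G, g₁ * g₀⁻¹ ∉ H →
      ∃ (n : G) (hn' : n ∈ H'),
        (ψ ⟨g₀ * n * g₀⁻¹, hH'H (hn.conj_mem n hn' g₀)⟩ : F) ≠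
        (ψ ⟨g₁ * n * g₁⁻¹, hH'H (hn.conj_mem n hn' g₁)⟩ : F) := by
    intro g₀ g₁ ht
    obtain ⟨m, hm, hne⟩ := hstab' (g₁ * g₀⁻¹) ht
    have hn'mem : g₀⁻¹ * m * g₀ ∈ H' := by simpa using hn.conj_mem m hm g₀⁻¹
    refine ⟨g₀⁻¹ * m * g₀, hn'mem, ?_⟩
    have e0 : (⟨g₀ * (g₀⁻¹ * m * g₀) * g₀⁻¹, hH'H (hn.conj_mem _ hn'mem g₀)⟩ : ↥H)
        = ⟨m, hH'H hm⟩ := Subtype.ext (by group)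
    have e1 : (⟨g₁ * (g₀⁻¹ * m * g₀) * g₁⁻¹, hH'H (hn.conj_mem _ hn'mem g₁)⟩ : ↥H) =
        ⟨(g₁ * g₀⁻¹) * m * (g₁ * g₀⁻¹)⁻¹, hH'H (hn.conj_mem m hm (g₁ * g₀⁻¹))⟩ :=
      Subtype.ext (by group)
    rw [e0, e1]
    intro hc
    exact hne (Units.ext hc.symm)
  -- key step: kill all cosets other than that of g₀, within any submodule
  have key : ∀ (N : ℕ) (M : Submodule (MonoidAlgebra F G) ρ.asModule) (f : ρ.asModule),
      f ∈ M → ∀ g₀ : G, {g : G | ev f g ≠ 0 ∧ g * g₀⁻¹ ∉ H}.ncard ≤ N →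
      ∃ f', f' ∈ M ∧ ev f' g₀ = ev f g₀ ∧ ∀ g : G, g * g₀⁻¹ ∉ H → ev f' g = 0 := by
    intro N
    induction N with
    | zero =>
      intro M f hf g₀ hcard
      refine ⟨f, hf, rfl, fun g hg => ?_⟩
      by_contra h0
      have hfin : {g : G | ev f g ≠ 0 ∧ g * g₀⁻¹ ∉ H}.Finite := Set.toFinite _
      have hemp : {g : G | ev f g ≠ 0 ∧ g * g₀⁻¹ ∉ H} = ∅ := by
        rw [← Set.ncard_eq_zero hfin]; omega
      exact (Set.eq_empty_iff_forall_notMem.mp hemp g) ⟨h0, hg⟩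
    | succ N ih =>
      intro M f hf g₀ hcard
      by_cases hS : ∀ g : G, g * g₀⁻¹ ∉ H → ev f g = 0
      · exact ⟨f, hf, rfl, hS⟩
      push_neg at hS
      obtain ⟨g₁, hg₁H, hg₁⟩ := hS
      obtain ⟨n, hn', hnesep⟩ := sep g₀ g₁ hg₁H
      set c₀ : F := (ψ ⟨g₀ * n * g₀⁻¹, hH'H (hn.conj_mem n hn' g₀)⟩ : F) with hc₀
      set c₁ : F := (ψ ⟨g₁ * n * g₁⁻¹, hH'H (hn.conj_mem n hn' g₁)⟩ : F) with hc₁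
      have hc : c₀ - c₁ ≠ 0 := sub_ne_zero.mpr hnesep
      set r : MonoidAlgebra F G := MonoidAlgebra.single n (c₀ - c₁)⁻¹ -
        MonoidAlgebra.single 1 ((c₀ - c₁)⁻¹ * c₁) with hr
      set f₁ : ρ.asModule := r • f with hf₁
      have hf₁M : f₁ ∈ M := M.smul_mem r hf
      have ev_f₁ : ∀ g : G, ev f₁ g =
          (c₀ - c₁)⁻¹ * ((ψ ⟨g * n * g⁻¹, hH'H (hn.conj_mem n hn' g)⟩ : F) - c₁) * ev f g := by
        intro g
        have hsplit : f₁ = ((MonoidAlgebra.single n (c₀ - c₁)⁻¹ : MonoidAlgebra F G) • f) -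
            ((MonoidAlgebra.single 1 ((c₀ - c₁)⁻¹ * c₁) : MonoidAlgebra F G) • f) := by
          rw [hf₁, hr]
          exact sub_smul _ _ f
        rw [hsplit, ev_sub, ev_smul, ev_smul, mul_one, ev_conj f g n hn']
        ring
      have hf₁g₀ : ev f₁ g₀ = ev f g₀ := by
        rw [ev_f₁ g₀, ← hc₀]
        field_simp
      have hf₁g₁ : ev f₁ g₁ = 0 := by
        rw [ev_f₁ g₁, ← hc₁]
        simp
      have hsub : {g : G | ev f₁ g ≠ 0 ∧ g * g₀⁻¹ ∉ H} ⊂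
          {g : G | ev f g ≠ 0 ∧ g * g₀⁻¹ ∉ H} := by
        constructor
        · intro g hg
          refine ⟨fun h0 => hg.1 ?_, hg.2⟩
          rw [ev_f₁ g, h0, mul_zero]
        · intro hsup
          exact (hsup ⟨hg₁, hg₁H⟩).1 hf₁g₁
      have hlt : {g : G | ev f₁ g ≠ 0 ∧ g * g₀⁻¹ ∉ H}.ncard <
          {g : G | ev f g ≠ 0 ∧ g * g₀⁻¹ ∉ H}.ncard :=
        Set.ncard_lt_ncard hsub (Set.toFinite _)
      obtain ⟨f', hf'M, hf'g₀, hf'supp⟩ := ih M f₁ hf₁M g₀ (by omega)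
      exact ⟨f', hf'M, by rw [hf'g₀, hf₁g₀], hf'supp⟩
  -- the standard generator e, supported on H
  have he_mem : (fun g : G => if hg : g ∈ H then (ψ ⟨g, hg⟩ : F) else 0) ∈ V := by
    intro h g
    show (if hg : (h : G) * g ∈ H then ((ψ ⟨(h : G) * g, hg⟩ : Fˣ) : F) else 0) =
      (ψ h : F) * (if hg : g ∈ H then ((ψ ⟨g, hg⟩ : Fˣ) : F) else 0)
    by_cases hg : g ∈ H
    · rw [dif_pos hg, dif_pos (mul_mem h.2 hg)]
      have e1 : (⟨↑h * g, mul_mem h.2 hg⟩ : ↥H) = h * ⟨g, hg⟩ := rfl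
      rw [e1, map_mul]
      push_cast
      ring
    · rw [dif_neg hg, dif_neg (fun hc => hg (by simpa using mul_mem (inv_mem h.2) hc)), mul_zero]
  set e : ↥V := ⟨_, he_mem⟩ with he
  set eV : ρ.asModule := ρ.asModuleEquiv.symm e with heV
  have ev_eV : ∀ g : G, ev eV g = if hg : g ∈ H then (ψ ⟨g, hg⟩ : F) else 0 := by
    intro g
    show ((ρ.asModuleEquiv (ρ.asModuleEquiv.symm e) : ↥V) : G → F) g = _
    rw [ρ.asModuleEquiv.apply_symm_apply]
  have heV_ne : eV ≠ 0 := by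
    intro hc
    have h1 : ev eV 1 = 0 := by
      rw [hc]; show ((ρ.asModuleEquiv 0 : ↥V) : G → F) 1 = 0; simp
    rw [ev_eV 1, dif_pos H.one_mem] at h1
    simp at h1
  -- any submodule containing eV is everything
  have span : ∀ (M : Submodule (MonoidAlgebra F G) ρ.asModule), eV ∈ M →
      ∀ (N : ℕ) (v : ρ.asModule), {g : G | ev v g ≠ 0}.ncard ≤ N → v ∈ M := by
    intro M heM N
    induction N with
    | zero =>
      intro v hcard
      have hfin : {g : G | ev v g ≠ 0}.Finite := Set.toFinite _
      have hemp : {g : G | ev v g ≠ 0} = ∅ := by rw [← Set.ncard_eq_zero hfin]; omega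
      have hv0 : v = 0 := ev_zero v (fun g => by
        by_contra h0
        exact (Set.eq_empty_iff_forall_notMem.mp hemp g) h0)
      rw [hv0]; exact M.zero_mem
    | succ N ih =>
      intro v hcard
      by_cases hv : ∀ g, ev v g = 0
      · rw [ev_zero v hv]; exact M.zero_mem
      push_neg at hv
      obtain ⟨g₀, hg₀⟩ := hv
      set w : ρ.asModule :=
        v - ((MonoidAlgebra.single g₀⁻¹ (ev v g₀) : MonoidAlgebra F G) • eV) with hw
      have ev_w : ∀ g : G, ev w g = ev v g - ev v g₀ * ev eV (g * g₀⁻¹) := by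
        intro g
        rw [hw, ev_sub, ev_smul]
      have hwsupp : ∀ g : G, ev w g ≠ 0 → ev v g ≠ 0 ∧ g ≠ g₀ := by
        intro g hg
        constructor
        · intro h0
          apply hg
          rw [ev_w g]
          by_cases hgH : g * g₀⁻¹ ∈ H
          · have hmul : ev v ((g * g₀⁻¹) * g₀) = (ψ ⟨g * g₀⁻¹, hgH⟩ : F) * ev v g₀ :=
              ev_prop v g₀ (g * g₀⁻¹) hgH
            have e2 : (g * g₀⁻¹) * g₀ = g := by group
            rw [e2, h0] at hmul
            rw [ev_eV, dif_pos hgH, h0, mul_comm, ← hmul]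
            ring
          · rw [ev_eV, dif_neg hgH, h0]; ring
        · intro hgg₀
          apply hg
          rw [ev_w g, hgg₀, ev_eV]
          have hone : g₀ * g₀⁻¹ ∈ H := by simpa using H.one_mem
          rw [dif_pos hone]
          have e3 : (⟨g₀ * g₀⁻¹, hone⟩ : ↥H) = (1 : ↥H) := Subtype.ext (by simp)
          rw [e3, map_one, Units.val_one, mul_one, sub_self]
      have hsub : {g : G | ev w g ≠ 0} ⊂ {g : G | ev v g ≠ 0} := by
        constructor
        · intro g hg; exact (hwsupp g hg).1
        · intro hsup
          have hm := hsup hg₀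
          have hg₀w : ev w g₀ = 0 := by
            by_contra h0
            exact (hwsupp g₀ h0).2 rfl
          exact hm hg₀w
      have hlt : {g : G | ev w g ≠ 0}.ncard < {g : G | ev v g ≠ 0}.ncard :=
        Set.ncard_lt_ncard hsub (Set.toFinite _)
      have hwM : w ∈ M := ih w (by omega)
      have hrw : v = w + ((MonoidAlgebra.single g₀⁻¹ (ev v g₀) : MonoidAlgebra F G) • eV) := by
        rw [hw]; abel
      rw [hrw]
      exact M.add_mem hwM (M.smul_mem _ heM)
  have main : ∀ (M : Submodule (MonoidAlgebra F G) ρ.asModule), M ≠ ⊥ → M = ⊤ := by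
    intro M hM
    obtain ⟨f, hfM, hf0⟩ := M.ne_bot_iff.mp hM
    have hex : ∃ g, ev f g ≠ 0 := by
      by_contra hc
      push_neg at hc
      exact hf0 (ev_zero f hc)
    obtain ⟨g₀, hg₀⟩ := hex
    obtain ⟨f', hf'M, hf'g₀, hf'supp⟩ := key _ M f hfM g₀ le_rfl
    have hf'0 : ev f' g₀ ≠ 0 := by rw [hf'g₀]; exact hg₀
    have heq : ((MonoidAlgebra.single g₀ ((ev f' g₀)⁻¹) : MonoidAlgebra F G) • f') = eV := by
      have hz : ∀ g, ev (((MonoidAlgebra.single g₀ ((ev f' g₀)⁻¹) : MonoidAlgebra F G) • f') - eV) g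
          = 0 := by
        intro g
        rw [ev_sub, ev_smul, ev_eV]
        by_cases hgH : g ∈ H
        · have hmul : ev f' (g * g₀) = (ψ ⟨g, hgH⟩ : F) * ev f' g₀ :=
            ev_prop f' g₀ g hgH
          rw [dif_pos hgH, hmul]
          field_simp
          ring
        · have hkill : ev f' (g * g₀) = 0 := by
            apply hf'supp
            have e4 : g * g₀ * g₀⁻¹ = g := by group
            rw [e4]; exact hgH
          rw [dif_neg hgH, hkill]
          ring
      exact sub_eq_zero.mp (ev_zero _ hz)
    have heM : eV ∈ M := heq ▸ M.smul_mem _ hf'M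
    apply Submodule.eq_top_iff'.mpr
    intro v
    exact span M heM _ v le_rfl
  refine { toNontrivial := ⟨⊥, ⊤, fun hc => heV_ne ?_⟩,
           eq_bot_or_eq_top := fun M => or_iff_not_imp_left.mpr (main M) }
  have hmem : eV ∈ (⊥ : Submodule (MonoidAlgebra F G) ρ.asModule) := hc ▸ Submodule.mem_top
  simpa using hmem
end
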